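/- Let A ≠ 0, B, C, D be real numbers satisfying B² + C² − 4AD = 1, and set a = −B/(2A), b = −C/(2A), R = 1/(2|A|). For any point (x,y) ∈ ℝ², put P = A(x²+y²) + Bx + Cy + D and r = √((x−a)² + (y−b)²). Then P = A(r² − R²), and if r > 0 then 2P/(1 + √(1+4AP)) = sign(A)·(r − R); in particular |2P/(1 + √(1+4AP))| = |r − R| is the Euclidean distance from (x,y) to the circle of center (a,b) and radius R. -/

import Mathlib

/-- For `A ≠ 0`, `B² + C² - 4AD = 1`, center `(a,b) = (-B/2A, -C/2A)`
and radius `R = 1/(2|A|)`: with `P = A(x²+y²) + Bx + Cy + D` and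
`r = √((x-a)² + (y-b)²)` one has `P = A(r² - R²)`, and if `r > 0` then
`2P/(1 + √(1+4AP)) = sign(A)·(r - R)`; in particular
`|2P/(1 + √(1+4AP))| = |r - R|` is the distance from `(x,y)` to the circle. -/
theorem stmt_10 (A B C D : ℝ) (hA : A ≠ 0) (hcon : B ^ 2 + C ^ 2 - 4 * A * D = 1)
    (a b R : ℝ) (ha : a = -B / (2 * A)) (hb : b = -C / (2 * A))
    (hR : R = 1 / (2 * |A|))
    (x y : ℝ) (P : ℝ) (hP : P = A * (x ^ 2 + y ^ 2) + B * x + C * y + D)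
    (r : ℝ) (hr : r = Real.sqrt ((x - a) ^ 2 + (y - b) ^ 2)) :
    P = A * (r ^ 2 - R ^ 2) ∧
    (0 < r →
      2 * P / (1 + Real.sqrt (1 + 4 * A * P)) = Real.sign A * (r - R) ∧
      |2 * P / (1 + Real.sqrt (1 + 4 * A * P))| = |r - R|) := by
  have habs : (0:ℝ) < |A| := abs_pos.mpr hA
  have hsq : |A| ^ 2 = A ^ 2 := sq_abs A
  have hr2 : r ^ 2 = (x - a) ^ 2 + (y - b) ^ 2 := by
    rw [hr]; exact Real.sq_sqrt (by positivity)
  have hRpos : 0 < R := by rw [hR]; positivity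
  have hR2 : R ^ 2 = 1 / (4 * A ^ 2) := by
    rw [hR, div_pow, mul_pow, hsq]; norm_num
  have h1 : P = A * (r ^ 2 - R ^ 2) := by
    rw [hP, hr2, hR2, ha, hb]
    field_simp
    linear_combination (-4) * hcon
  refine ⟨h1, fun hrpos => ?_⟩
  have hS : Real.sqrt (1 + 4 * A * P) = 2 * |A| * r := by
    have heq : 1 + 4 * A * P = (2 * |A| * r) ^ 2 := by
      rw [h1, hR2]
      field_simp
      rw [hsq]
      ring
    rw [heq, Real.sqrt_sq (by positivity)]
  have hsign : Real.sign A = A / |A| := by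
    rcases hA.lt_or_gt with h | h
    · rw [Real.sign_of_neg h, abs_of_neg h]
      field_simp
    · rw [Real.sign_of_pos h, abs_of_pos h]
      rw [div_self h.ne']
  have hden : 1 + 2 * |A| * r = 2 * |A| * (R + r) := by
    rw [hR]; field_simp
  have key : 2 * P / (1 + Real.sqrt (1 + 4 * A * P)) = Real.sign A * (r - R) := by
    rw [hS, h1, hsign, hden]
    have hRr : 0 < R + r := by linarith
    field_simp
    ring
  refine ⟨key, ?_⟩
  rw [key, abs_mul, hsign, abs_div, abs_abs, div_self habs.ne', one_mul]
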